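/- If (F, m, η) is a proper monad, then a non-unital F-module (B, ϱ) (satisfying ϱ·F(ϱ) = ϱ·m_B) is firm if and only if it is unital, i.e., ϱ·η_B = id_B. -/

import Mathlib

open CategoryTheory

universe v u

section

variable {B : Type u} [Category.{v} B]

/-- A non-unital module over the pair `(F, m)`. -/
structure NUMod (F : B ⥤ B) (m : F ⋙ F ⟶ F) where
  pt : B
  act : F.obj pt ⟶ pt
  massoc : F.map act ≫ act = m.app pt ≫ act

/-- Morphism property in the category of non-unital `F`-modules. -/
def IsModHom {F : B ⥤ B} {m : F ⋙ F ⟶ F} (X Y : NUMod F m)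
    (f : X.pt ⟶ Y.pt) : Prop :=
  F.map f ≫ Y.act = X.act ≫ f

/-- For a proper monad `(F,m,η)`, a non-unital `F`-module is firm
(its defining fork is a coequaliser in non-unital modules) iff it is unital. -/
theorem monad_firm_iff_unital
    (F : B ⥤ B) (m : F ⋙ F ⟶ F) (η : 𝟭 B ⟶ F)
    (massoc : ∀ X : B, F.map (m.app X) ≫ m.app X = m.app (F.obj X) ≫ m.app X)
    (unit₁ : ∀ X : B, F.map (η.app X) ≫ m.app X = 𝟙 (F.obj X))
    (unit₂ : ∀ X : B, η.app (F.obj X) ≫ m.app X = 𝟙 (F.obj X))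
    (B₀ : NUMod F m) :
    (∀ (Q : NUMod F m) (h : F.obj B₀.pt ⟶ Q.pt),
      IsModHom ⟨F.obj B₀.pt, m.app B₀.pt, massoc B₀.pt⟩ Q h →
      m.app B₀.pt ≫ h = F.map B₀.act ≫ h →
      ∃! q : B₀.pt ⟶ Q.pt, IsModHom B₀ Q q ∧ B₀.act ≫ q = h)
    ↔ η.app B₀.pt ≫ B₀.act = 𝟙 B₀.pt := by
  have nat : B₀.act ≫ η.app B₀.pt = η.app (F.obj B₀.pt) ≫ F.map B₀.act := by
    simpa using η.naturality B₀.act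
  constructor
  · intro hfirm
    obtain ⟨q, _, huniq⟩ := hfirm B₀ B₀.act B₀.massoc B₀.massoc.symm
    have h1 : η.app B₀.pt ≫ B₀.act = q := by
      apply huniq
      constructor
      · show F.map (η.app B₀.pt ≫ B₀.act) ≫ B₀.act = B₀.act ≫ η.app B₀.pt ≫ B₀.act
        rw [F.map_comp, Category.assoc, B₀.massoc, ← Category.assoc, unit₁,
          ← Category.assoc, nat, Category.assoc, B₀.massoc,
          ← Category.assoc, unit₂]
      · rw [← Category.assoc, nat, Category.assoc, B₀.massoc, ← Category.assoc,
          unit₂, Category.id_comp]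
    have h2 : 𝟙 B₀.pt = q := by
      apply huniq
      exact ⟨by simp [_root_.IsModHom], by simp⟩
    rw [h1, h2]
  · intro hu Q h hmod hcoeq
    have hmod' : F.map h ≫ Q.act = m.app B₀.pt ≫ h := hmod
    have fac : B₀.act ≫ η.app B₀.pt ≫ h = h := by
      rw [← Category.assoc, nat, Category.assoc, ← hcoeq, ← Category.assoc,
        unit₂, Category.id_comp]
    refine ⟨η.app B₀.pt ≫ h, ⟨?_, fac⟩, ?_⟩
    · show F.map (η.app B₀.pt ≫ h) ≫ Q.act = B₀.act ≫ η.app B₀.pt ≫ h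
      rw [fac, F.map_comp, Category.assoc, hmod', ← Category.assoc, unit₁]
      simp
    · rintro q' ⟨_, hq'⟩
      rw [← hq', ← Category.assoc, hu]
      simp

end
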